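/- The fourth moment of distances between points in B(p,N) is exactly M₄(p,N) = (2/45)·N(N+1)(p−1)·[(2N² + 2N)(5p⁵ − 8p⁴ + p³ + 8p² − 21p − 18) − 3(p² − p − 1)²]. -/

import Mathlib

/-- The cyclotomic norm: `‖α‖ = √(Σ_{j=1}^{p−1} Tr(α·ω^j)²)`. -/
noncomputable def cycNorm (p : ℕ) {K : Type*} [Field K] [Algebra ℚ K] (ω : K) (α : K) : ℝ :=
  Real.sqrt (∑ j ∈ Finset.Icc 1 (p - 1), ((Algebra.trace ℚ K (α * ω ^ j) : ℚ) : ℝ) ^ 2)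

/-- The metric induced by the cyclotomic norm: `d(α, β) = ‖α − β‖`. -/
noncomputable def cycDist (p : ℕ) {K : Type*} [Field K] [Algebra ℚ K] (ω : K) (α β : K) : ℝ :=
  cycNorm p ω (α - β)

/-- The box `B(p,N) = {a₁ω + ⋯ + a_{p−1}ω^{p−1} : aᵢ ∈ ℤ, −N ≤ aᵢ ≤ N}` as a finset of `K`. -/
noncomputable def cycBox (p : ℕ) {K : Type*} [Field K] [Algebra ℚ K] (ω : K) (N : ℕ) :
    Finset K :=
  letI := Classical.decEq K
  (Fintype.piFinset fun _ : Fin (p - 1) => Finset.Icc (-(N : ℤ)) (N : ℤ)).image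
    fun a => ∑ i : Fin (p - 1), (a i : K) * ω ^ ((i : ℕ) + 1)

section Aux
open Finset Polynomial


-- step lemma for Icc sums over ℤ
lemma Icc_step (m : ℤ) (hm : 0 ≤ m) (g : ℤ → ℝ) :
    ∑ x ∈ Finset.Icc (-(m+1)) (m+1), g x
      = g (-(m+1)) + g (m+1) + ∑ x ∈ Finset.Icc (-m) m, g x := by
  have h : Finset.Icc (-(m+1)) (m+1) = insert (-(m+1)) (insert (m+1) (Finset.Icc (-m) m)) := by
    ext x; simp only [Finset.mem_Icc, Finset.mem_insert]; omega
  rw [h, Finset.sum_insert (by simp only [Finset.mem_insert, Finset.mem_Icc]; omega),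
    Finset.sum_insert (by simp only [Finset.mem_Icc]; omega)]
  ring

lemma sigma_sums (N : ℕ) :
    ((∑ x ∈ Finset.Icc (-(N:ℤ)) N, (1:ℝ)) = 2*N+1) ∧
    ((∑ x ∈ Finset.Icc (-(N:ℤ)) N, (x:ℝ)) = 0) ∧
    ((∑ x ∈ Finset.Icc (-(N:ℤ)) N, (x:ℝ)^2) = N*(N+1)*(2*N+1)/3) ∧
    ((∑ x ∈ Finset.Icc (-(N:ℤ)) N, (x:ℝ)^3) = 0) ∧
    ((∑ x ∈ Finset.Icc (-(N:ℤ)) N, (x:ℝ)^4) = N*(N+1)*(2*N+1)*(3*N^2+3*N-1)/15) := by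
  induction N with
  | zero => norm_num
  | succ N ih =>
    obtain ⟨h0, h1, h2, h3, h4⟩ := ih
    have hc : ((N:ℤ):ℝ) = (N:ℝ) := by push_cast; ring
    refine ⟨?_, ?_, ?_, ?_, ?_⟩ <;>
      · push_cast
        rw [Icc_step (N:ℤ) (by positivity)]
        push_cast
        simp only [h0, h1, h2, h3, h4]
        ring


lemma sum_piFinset_succ {M : Type*} [AddCommMonoid M] {γ : Type*} [DecidableEq γ]
    (D : Finset γ) (n : ℕ) (f : (Fin (n+1) → γ) → M) :
    ∑ a ∈ Fintype.piFinset (fun _ : Fin (n+1) => D), f a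
      = ∑ x ∈ D, ∑ a ∈ Fintype.piFinset (fun _ : Fin n => D), f (Fin.cons x a) := by
  rw [← Finset.sum_product']
  refine Finset.sum_nbij' (fun a => (a 0, Fin.tail a)) (fun q => Fin.cons q.1 q.2) ?_ ?_ ?_ ?_ ?_
  · intro a ha
    simp only [Fintype.mem_piFinset] at ha
    simp [Finset.mem_product, Fintype.mem_piFinset, Fin.tail, ha]
  · intro q hq
    simp only [Finset.mem_product, Fintype.mem_piFinset] at hq
    simp only [Fintype.mem_piFinset]
    intro i
    refine Fin.cases ?_ ?_ i
    · simpa using hq.1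
    · intro j; simpa using hq.2 j
  · intro a ha; exact Fin.cons_self_tail a
  · intro q hq; simp
  · intro a ha; rw [Fin.cons_self_tail]

lemma moments_pi {γ : Type*} [DecidableEq γ] (V : Finset γ) (t : γ → ℝ) (M μ2 μ4 : ℝ)
    (h0 : ∑ v ∈ V, (1:ℝ) = M)
    (h1 : ∑ v ∈ V, t v = 0)
    (h2 : ∑ v ∈ V, t v ^ 2 = M * μ2)
    (h3 : ∑ v ∈ V, t v ^ 3 = 0)
    (h4 : ∑ v ∈ V, t v ^ 4 = M * μ4) (n : ℕ) :
    (∑ z ∈ Fintype.piFinset (fun _ : Fin n => V), (1:ℝ) = M^n) ∧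
    (∑ z ∈ Fintype.piFinset (fun _ : Fin n => V), (∑ i, t (z i)) = 0) ∧
    (∑ z ∈ Fintype.piFinset (fun _ : Fin n => V), (∑ i, t (z i))^2 = M^n * (n * μ2)) ∧
    (∑ z ∈ Fintype.piFinset (fun _ : Fin n => V), (∑ i, t (z i))^3 = 0) ∧
    (∑ z ∈ Fintype.piFinset (fun _ : Fin n => V), (∑ i, t (z i))^4
        = M^n * (n * μ4 + 3*n*((n:ℝ)-1)*μ2^2)) ∧
    (∑ z ∈ Fintype.piFinset (fun _ : Fin n => V), (∑ i, t (z i)^2) = M^n * (n * μ2)) ∧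
    (∑ z ∈ Fintype.piFinset (fun _ : Fin n => V), (∑ i, t (z i)^2)^2
        = M^n * (n * μ4 + n*((n:ℝ)-1)*μ2^2)) ∧
    (∑ z ∈ Fintype.piFinset (fun _ : Fin n => V), (∑ i, t (z i)^2)*(∑ i, t (z i)) = 0) ∧
    (∑ z ∈ Fintype.piFinset (fun _ : Fin n => V), (∑ i, t (z i)^2)*(∑ i, t (z i))^2
        = M^n * (n * μ4 + n*((n:ℝ)-1)*μ2^2)) := by
  induction n with
  | zero => norm_num
  | succ n ih =>
    obtain ⟨c0, c1, c2, c3, c4, d1, d2, e1, e2⟩ := ih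
    have expand : ∀ f : (Fin (n+1) → γ) → ℝ,
        ∑ z ∈ Fintype.piFinset (fun _ : Fin (n+1) => V), f z
          = ∑ v ∈ V, ∑ z ∈ Fintype.piFinset (fun _ : Fin n => V), f (Fin.cons v z) :=
      fun f => sum_piFinset_succ V n f
    have hS : ∀ (v : γ) (z : Fin n → γ),
        (∑ i : Fin (n+1), t ((Fin.cons v z : Fin (n+1) → γ) i)) = t v + ∑ i : Fin n, t (z i) := by
      intro v z; rw [Fin.sum_univ_succ]; simp
    have hQ : ∀ (v : γ) (z : Fin n → γ),
        (∑ i : Fin (n+1), t ((Fin.cons v z : Fin (n+1) → γ) i)^2)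
          = t v^2 + ∑ i : Fin n, t (z i)^2 := by
      intro v z; rw [Fin.sum_univ_succ]; simp
    refine ⟨?_, ?_, ?_, ?_, ?_, ?_, ?_, ?_, ?_⟩
    · rw [expand]
      have key : ∀ v ∈ V, ∑ z ∈ Fintype.piFinset (fun _ : Fin n => V), (1:ℝ)
          = M^n * 1 := fun v _ => by rw [c0]; ring
      rw [Finset.sum_congr rfl key]
      simp only [← Finset.mul_sum, h0]
      ring
    · rw [expand]
      simp only [hS]
      have key : ∀ v ∈ V, ∑ z ∈ Fintype.piFinset (fun _ : Fin n => V),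
          (t v + ∑ i, t (z i)) = M^n * t v := by
        intro v _
        rw [Finset.sum_congr rfl (fun z _ => show t v + (∑ i, t (z i))
          = t v * 1 + (∑ i, t (z i)) from by ring)]
        simp only [Finset.sum_add_distrib, ← Finset.mul_sum, c0, c1]
        ring
      rw [Finset.sum_congr rfl key]
      simp only [← Finset.mul_sum, h1]
      ring
    · rw [expand]
      simp only [hS]
      have key : ∀ v ∈ V, ∑ z ∈ Fintype.piFinset (fun _ : Fin n => V),
          (t v + ∑ i, t (z i))^2 = M^n * t v^2 + (M^n * ((n:ℝ) * μ2)) * 1 := by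
        intro v _
        rw [Finset.sum_congr rfl (fun z _ => show (t v + ∑ i, t (z i))^2
          = t v^2 * 1 + (2 * t v) * (∑ i, t (z i)) + (∑ i, t (z i))^2 from by ring)]
        simp only [Finset.sum_add_distrib, ← Finset.mul_sum, c0, c1, c2]
        ring
      rw [Finset.sum_congr rfl key]
      simp only [Finset.sum_add_distrib, ← Finset.mul_sum, h0, h1, h2]
      push_cast
      ring
    · rw [expand]
      simp only [hS]
      have key : ∀ v ∈ V, ∑ z ∈ Fintype.piFinset (fun _ : Fin n => V),
          (t v + ∑ i, t (z i))^3 = M^n * t v^3 + (3 * (M^n * ((n:ℝ) * μ2))) * t v := by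
        intro v _
        rw [Finset.sum_congr rfl (fun z _ => show (t v + ∑ i, t (z i))^3
          = t v^3 * 1 + (3 * t v^2) * (∑ i, t (z i)) + (3 * t v) * (∑ i, t (z i))^2
            + (∑ i, t (z i))^3 from by ring)]
        simp only [Finset.sum_add_distrib, ← Finset.mul_sum, c0, c1, c2, c3]
        ring
      rw [Finset.sum_congr rfl key]
      simp only [Finset.sum_add_distrib, ← Finset.mul_sum, h1, h3]
      ring
    · rw [expand]
      simp only [hS]
      have key : ∀ v ∈ V, ∑ z ∈ Fintype.piFinset (fun _ : Fin n => V),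
          (t v + ∑ i, t (z i))^4 = M^n * t v^4 + (6 * (M^n * ((n:ℝ) * μ2))) * t v^2
            + (M^n * ((n:ℝ) * μ4 + 3*(n:ℝ)*((n:ℝ)-1)*μ2^2)) * 1 := by
        intro v _
        rw [Finset.sum_congr rfl (fun z _ => show (t v + ∑ i, t (z i))^4
          = t v^4 * 1 + (4 * t v^3) * (∑ i, t (z i)) + (6 * t v^2) * (∑ i, t (z i))^2
            + (4 * t v) * (∑ i, t (z i))^3 + (∑ i, t (z i))^4 from by ring)]
        simp only [Finset.sum_add_distrib, ← Finset.mul_sum, c0, c1, c2, c3, c4]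
        ring
      rw [Finset.sum_congr rfl key]
      simp only [Finset.sum_add_distrib, ← Finset.mul_sum, h0, h2, h4]
      push_cast
      ring
    · rw [expand]
      simp only [hQ]
      have key : ∀ v ∈ V, ∑ z ∈ Fintype.piFinset (fun _ : Fin n => V),
          (t v^2 + ∑ i, t (z i)^2) = M^n * t v^2 + (M^n * ((n:ℝ) * μ2)) * 1 := by
        intro v _
        rw [Finset.sum_congr rfl (fun z _ => show t v^2 + (∑ i, t (z i)^2)
          = t v^2 * 1 + (∑ i, t (z i)^2) from by ring)]
        simp only [Finset.sum_add_distrib, ← Finset.mul_sum, c0, d1]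
        ring
      rw [Finset.sum_congr rfl key]
      simp only [Finset.sum_add_distrib, ← Finset.mul_sum, h0, h2]
      push_cast
      ring
    · rw [expand]
      simp only [hQ]
      have key : ∀ v ∈ V, ∑ z ∈ Fintype.piFinset (fun _ : Fin n => V),
          (t v^2 + ∑ i, t (z i)^2)^2 = M^n * t v^4 + (2 * (M^n * ((n:ℝ) * μ2))) * t v^2
            + (M^n * ((n:ℝ) * μ4 + (n:ℝ)*((n:ℝ)-1)*μ2^2)) * 1 := by
        intro v _
        rw [Finset.sum_congr rfl (fun z _ => show (t v^2 + ∑ i, t (z i)^2)^2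
          = t v^4 * 1 + (2 * t v^2) * (∑ i, t (z i)^2) + (∑ i, t (z i)^2)^2 from by ring)]
        simp only [Finset.sum_add_distrib, ← Finset.mul_sum, c0, d1, d2]
        ring
      rw [Finset.sum_congr rfl key]
      simp only [Finset.sum_add_distrib, ← Finset.mul_sum, h0, h2, h4]
      push_cast
      ring
    · rw [expand]
      simp only [hS, hQ]
      have key : ∀ v ∈ V, ∑ z ∈ Fintype.piFinset (fun _ : Fin n => V),
          ((t v^2 + ∑ i, t (z i)^2) * (t v + ∑ i, t (z i)))
            = M^n * t v^3 + (M^n * ((n:ℝ) * μ2)) * t v := by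
        intro v _
        rw [Finset.sum_congr rfl (fun z _ => show (t v^2 + ∑ i, t (z i)^2) * (t v + ∑ i, t (z i))
          = t v^3 * 1 + t v^2 * (∑ i, t (z i)) + t v * (∑ i, t (z i)^2)
            + (∑ i, t (z i)^2) * (∑ i, t (z i)) from by ring)]
        simp only [Finset.sum_add_distrib, ← Finset.mul_sum, c0, c1, d1, e1]
        ring
      rw [Finset.sum_congr rfl key]
      simp only [Finset.sum_add_distrib, ← Finset.mul_sum, h1, h3]
      ring
    · rw [expand]
      simp only [hS, hQ]
      have key : ∀ v ∈ V, ∑ z ∈ Fintype.piFinset (fun _ : Fin n => V),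
          ((t v^2 + ∑ i, t (z i)^2) * (t v + ∑ i, t (z i))^2)
            = M^n * t v^4 + (2 * (M^n * ((n:ℝ) * μ2))) * t v^2
              + (M^n * ((n:ℝ) * μ4 + (n:ℝ)*((n:ℝ)-1)*μ2^2)) * 1 := by
        intro v _
        rw [Finset.sum_congr rfl (fun z _ =>
          show (t v^2 + ∑ i, t (z i)^2) * (t v + ∑ i, t (z i))^2
          = t v^4 * 1 + (2 * t v^3) * (∑ i, t (z i)) + t v^2 * (∑ i, t (z i))^2
            + t v^2 * (∑ i, t (z i)^2) + (2 * t v) * ((∑ i, t (z i)^2) * (∑ i, t (z i)))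
            + (∑ i, t (z i)^2) * (∑ i, t (z i))^2 from by ring)]
        simp only [Finset.sum_add_distrib, ← Finset.mul_sum, c0, c1, c2, d1, e1, e2]
        ring
      rw [Finset.sum_congr rfl key]
      simp only [Finset.sum_add_distrib, ← Finset.mul_sum, h0, h2, h4]
      push_cast
      ring

lemma double_to_pair {γ : Type*} [DecidableEq γ] (D : Finset γ) (n : ℕ)
    (F : (Fin n → γ) → (Fin n → γ) → ℝ) :
    ∑ a ∈ Fintype.piFinset (fun _ : Fin n => D), ∑ b ∈ Fintype.piFinset (fun _ : Fin n => D), F a b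
      = ∑ z ∈ Fintype.piFinset (fun _ : Fin n => D ×ˢ D),
          F (fun i => (z i).1) (fun i => (z i).2) := by
  rw [← Finset.sum_product']
  refine Finset.sum_nbij' (fun q => fun i => (q.1 i, q.2 i))
    (fun z => (fun i => (z i).1, fun i => (z i).2)) ?_ ?_ ?_ ?_ ?_
  · intro q hq
    simp only [Finset.mem_product, Fintype.mem_piFinset] at hq
    simp only [Fintype.mem_piFinset, Finset.mem_product]
    exact fun i => ⟨hq.1 i, hq.2 i⟩
  · intro z hz
    simp only [Fintype.mem_piFinset, Finset.mem_product] at hz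
    simp only [Finset.mem_product, Fintype.mem_piFinset]
    exact ⟨fun i => (hz i).1, fun i => (hz i).2⟩
  · intro q _; rfl
  · intro z _; rfl
  · intro q _; rfl

-- moments of the difference of two independent variables uniform on Icc (-N) N
lemma diff_moments (N : ℕ) :
    (∑ v ∈ (Finset.Icc (-(N:ℤ)) N) ×ˢ (Finset.Icc (-(N:ℤ)) N), (1:ℝ)
        = (2*(N:ℝ)+1)^2) ∧
    (∑ v ∈ (Finset.Icc (-(N:ℤ)) N) ×ˢ (Finset.Icc (-(N:ℤ)) N), ((v.1 - v.2 : ℤ):ℝ) = 0) ∧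
    (∑ v ∈ (Finset.Icc (-(N:ℤ)) N) ×ˢ (Finset.Icc (-(N:ℤ)) N), ((v.1 - v.2 : ℤ):ℝ)^2
        = (2*(N:ℝ)+1)^2 * (2*((N:ℝ)*(N+1))/3)) ∧
    (∑ v ∈ (Finset.Icc (-(N:ℤ)) N) ×ˢ (Finset.Icc (-(N:ℤ)) N), ((v.1 - v.2 : ℤ):ℝ)^3 = 0) ∧
    (∑ v ∈ (Finset.Icc (-(N:ℤ)) N) ×ˢ (Finset.Icc (-(N:ℤ)) N), ((v.1 - v.2 : ℤ):ℝ)^4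
        = (2*(N:ℝ)+1)^2 * (2*((N:ℝ)*(N+1))*(8*((N:ℝ)*(N+1))-1)/15)) := by
  obtain ⟨s0, s1, s2, s3, s4⟩ := sigma_sums N
  have hcard : ((Finset.Icc (-(N:ℤ)) N).card : ℝ) = 2*(N:ℝ)+1 := by
    rw [Finset.card_eq_sum_ones]
    push_cast
    rw [show ∑ y ∈ Finset.Icc (-(N:ℤ)) N, (1:ℝ) = 2*(N:ℝ)+1 from s0]
  refine ⟨?_, ?_, ?_, ?_, ?_⟩
  · rw [Finset.sum_product]
    rw [Finset.sum_congr rfl (fun x _ => s0), Finset.sum_const, nsmul_eq_mul, hcard]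
    ring
  · rw [Finset.sum_product]
    have inner : ∀ x ∈ Finset.Icc (-(N:ℤ)) N, ∑ y ∈ Finset.Icc (-(N:ℤ)) N, ((x - y : ℤ):ℝ)
        = (x:ℝ) * (2*(N:ℝ)+1) := by
      intro x _
      rw [Finset.sum_congr rfl (fun y _ => show ((x - y : ℤ):ℝ)
        = (x:ℝ) * 1 - (y:ℝ) from by push_cast; ring)]
      rw [Finset.sum_sub_distrib, ← Finset.mul_sum, s0, s1]
      ring
    rw [Finset.sum_congr rfl inner]
    rw [show (fun x : ℤ => (x:ℝ) * (2*(N:ℝ)+1)) = fun x : ℤ => (x:ℝ) * (2*(N:ℝ)+1) from rfl,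
      ← Finset.sum_mul, s1]
    ring
  · rw [Finset.sum_product]
    have inner : ∀ x ∈ Finset.Icc (-(N:ℤ)) N, ∑ y ∈ Finset.Icc (-(N:ℤ)) N, ((x - y : ℤ):ℝ)^2
        = (x:ℝ)^2 * (2*(N:ℝ)+1) + (N:ℝ)*((N:ℝ)+1)*(2*(N:ℝ)+1)/3 := by
      intro x _
      rw [Finset.sum_congr rfl (fun y _ => show ((x - y : ℤ):ℝ)^2
        = ((x:ℝ)^2 - (2*(x:ℝ))*(y:ℝ)) + (y:ℝ)^2 from by push_cast; ring)]
      rw [Finset.sum_add_distrib, Finset.sum_sub_distrib, ← Finset.mul_sum, Finset.sum_const,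
        nsmul_eq_mul, s1, s2]
      have : ((Finset.Icc (-(N:ℤ)) N).card : ℝ) = 2*(N:ℝ)+1 := by
        rw [show (Finset.Icc (-(N:ℤ)) N).card = ∑ y ∈ Finset.Icc (-(N:ℤ)) N, 1 from
          (Finset.card_eq_sum_ones _)]
        push_cast
        rw [show ∑ y ∈ Finset.Icc (-(N:ℤ)) N, (1:ℝ) = 2*(N:ℝ)+1 from s0]
      rw [this]
      ring
    rw [Finset.sum_congr rfl inner, Finset.sum_add_distrib, ← Finset.sum_mul, s2,
      Finset.sum_const, nsmul_eq_mul]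
    have : ((Finset.Icc (-(N:ℤ)) N).card : ℝ) = 2*(N:ℝ)+1 := by
      rw [Finset.card_eq_sum_ones]
      push_cast
      rw [show ∑ y ∈ Finset.Icc (-(N:ℤ)) N, (1:ℝ) = 2*(N:ℝ)+1 from s0]
    rw [this]
    ring
  · rw [Finset.sum_product]
    have inner : ∀ x ∈ Finset.Icc (-(N:ℤ)) N, ∑ y ∈ Finset.Icc (-(N:ℤ)) N, ((x - y : ℤ):ℝ)^3
        = (x:ℝ)^3 * (2*(N:ℝ)+1) + (x:ℝ) * ((N:ℝ)*((N:ℝ)+1)*(2*(N:ℝ)+1)) := by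
      intro x _
      rw [Finset.sum_congr rfl (fun y _ => show ((x - y : ℤ):ℝ)^3
        = (((x:ℝ)^3 * 1 - (3*(x:ℝ)^2)*(y:ℝ)) + (3*(x:ℝ))*(y:ℝ)^2) - (y:ℝ)^3
          from by push_cast; ring)]
      rw [Finset.sum_sub_distrib, Finset.sum_add_distrib, Finset.sum_sub_distrib,
        ← Finset.mul_sum, ← Finset.mul_sum, ← Finset.mul_sum, s0, s1, s2, s3]
      ring
    rw [Finset.sum_congr rfl inner, Finset.sum_add_distrib, ← Finset.sum_mul, s3,
      ← Finset.sum_mul, s1]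
    ring
  · rw [Finset.sum_product]
    have inner : ∀ x ∈ Finset.Icc (-(N:ℤ)) N, ∑ y ∈ Finset.Icc (-(N:ℤ)) N, ((x - y : ℤ):ℝ)^4
        = (x:ℝ)^4 * (2*(N:ℝ)+1) + (x:ℝ)^2 * (2*(N:ℝ)*((N:ℝ)+1)*(2*(N:ℝ)+1))
          + (N:ℝ)*((N:ℝ)+1)*(2*(N:ℝ)+1)*(3*(N:ℝ)^2+3*(N:ℝ)-1)/15 := by
      intro x _
      rw [Finset.sum_congr rfl (fun y _ => show ((x - y : ℤ):ℝ)^4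
        = ((((x:ℝ)^4 * 1 - (4*(x:ℝ)^3)*(y:ℝ)) + (6*(x:ℝ)^2)*(y:ℝ)^2) - (4*(x:ℝ))*(y:ℝ)^3)
          + (y:ℝ)^4 from by push_cast; ring)]
      rw [Finset.sum_add_distrib, Finset.sum_sub_distrib, Finset.sum_add_distrib,
        Finset.sum_sub_distrib, ← Finset.mul_sum, ← Finset.mul_sum, ← Finset.mul_sum,
        ← Finset.mul_sum, s0, s1, s2, s3, s4]
      ring
    rw [Finset.sum_congr rfl inner, Finset.sum_add_distrib, Finset.sum_add_distrib,
      ← Finset.sum_mul, s4, ← Finset.sum_mul, s2, Finset.sum_const, nsmul_eq_mul, hcard]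
    ring


variable {p : ℕ+} {K : Type*} [Field K] [Algebra ℚ K] [IsCyclotomicExtension {(p : ℕ)} ℚ K]

lemma trace_one_cyc (hp : (p : ℕ).Prime) :
    Algebra.trace ℚ K 1 = ((p : ℕ) : ℚ) - 1 := by
  have hirr : Irreducible (cyclotomic p ℚ) := cyclotomic.irreducible_rat p.pos
  have hfin : Module.finrank ℚ K = ((p:ℕ)).totient := IsCyclotomicExtension.finrank K hirr
  rw [show (1 : K) = algebraMap ℚ K 1 from (map_one _).symm, Algebra.trace_algebraMap]
  rw [hfin, Nat.totient_prime hp]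
  have : 1 ≤ (p:ℕ) := p.pos
  rw [nsmul_eq_mul, Nat.cast_sub this]
  push_cast
  ring

lemma trace_prim (hp : (p : ℕ).Prime) {ω : K} (hω : IsPrimitiveRoot ω p)
    (k : ℕ) (hk : k.Coprime p) :
    Algebra.trace ℚ K (ω ^ k) = Algebra.trace ℚ K ω := by
  haveI : CharZero K := charZero_of_injective_algebraMap (algebraMap ℚ K).injective
  have hω' : IsPrimitiveRoot (ω ^ k) p := hω.pow_of_coprime k hk
  have hirr : Irreducible (cyclotomic p ℚ) := cyclotomic.irreducible_rat p.pos
  have haev : ∀ {x : K}, IsPrimitiveRoot x p → (Polynomial.aeval x) (cyclotomic p ℚ) = 0 := by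
    intro x hx
    rw [Polynomial.aeval_def, ← Polynomial.eval_map, map_cyclotomic]
    exact hx.isRoot_cyclotomic p.pos
  have hmin : minpoly ℚ ((hω.powerBasis ℚ).gen) = minpoly ℚ ((hω'.powerBasis ℚ).gen) := by
    rw [IsPrimitiveRoot.powerBasis_gen, IsPrimitiveRoot.powerBasis_gen,
      ← minpoly.eq_of_irreducible_of_monic hirr (haev hω) (cyclotomic.monic p ℚ),
      ← minpoly.eq_of_irreducible_of_monic hirr (haev hω') (cyclotomic.monic p ℚ)]
  have := Algebra.trace_eq_of_algEquiv ((hω.powerBasis ℚ).equivOfMinpoly (hω'.powerBasis ℚ) hmin) ω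
  rw [show ((hω.powerBasis ℚ).equivOfMinpoly (hω'.powerBasis ℚ) hmin) ω = ω ^ k from ?_] at this
  · exact this
  · have := PowerBasis.equivOfMinpoly_gen (hω.powerBasis ℚ) (hω'.powerBasis ℚ) hmin
    rwa [IsPrimitiveRoot.powerBasis_gen, IsPrimitiveRoot.powerBasis_gen] at this

lemma trace_pow (hp : (p : ℕ).Prime) {ω : K} (hω : IsPrimitiveRoot ω p) (e : ℕ) :
    Algebra.trace ℚ K (ω ^ e) = if (p : ℕ) ∣ e then ((p : ℕ) : ℚ) - 1 else -1 := by
  have hp1 : 1 < (p : ℕ) := hp.one_lt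
  -- first: trace ω = -1
  have hgeom : ∑ i ∈ Finset.range (p : ℕ), ω ^ i = 0 := hω.geom_sum_eq_zero hp1
  have htr : ∀ k ∈ Finset.Ico 1 (p : ℕ), Algebra.trace ℚ K (ω ^ k) = Algebra.trace ℚ K ω := by
    intro k hk
    simp only [Finset.mem_Ico] at hk
    refine trace_prim hp hω k (Nat.Coprime.symm (hp.coprime_iff_not_dvd.mpr ?_))
    intro hdvd
    have := Nat.le_of_dvd (by omega) hdvd
    omega
  have hsum : (0 : ℚ) = ((p:ℕ) - 1 : ℚ) + ((p:ℕ) - 1 : ℚ) * Algebra.trace ℚ K ω := by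
    have h0 : (Algebra.trace ℚ K) (∑ i ∈ Finset.range (p : ℕ), ω ^ i) = 0 := by
      rw [hgeom]; exact map_zero _
    rw [map_sum] at h0
    rw [Finset.range_eq_Ico, Finset.sum_eq_sum_Ico_succ_bot (by omega : 0 < (p:ℕ))] at h0
    rw [Finset.sum_congr rfl htr, Finset.sum_const, pow_zero, trace_one_cyc hp] at h0
    rw [← h0]
    simp only [Nat.card_Ico, nsmul_eq_mul]
    have : 1 ≤ (p:ℕ) := by omega
    rw [Nat.cast_sub this]
    push_cast
    ring
  have htrω : Algebra.trace ℚ K ω = -1 := by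
    have hne : ((p:ℕ) - 1 : ℚ) ≠ 0 := by
      have : (2:ℚ) ≤ ((p:ℕ):ℚ) := by exact_mod_cast hp.two_le
      intro h; nlinarith
    have h2 : (((p:ℕ):ℚ) - 1) * (1 + Algebra.trace ℚ K ω) = 0 := by linear_combination -hsum
    have := (mul_eq_zero.mp h2).resolve_left hne
    linarith
  by_cases hdvd : (p : ℕ) ∣ e
  · rw [if_pos hdvd, hω.pow_eq_one_iff_dvd e |>.mpr hdvd, trace_one_cyc hp]
  · rw [if_neg hdvd]
    have hmod : ω ^ e = ω ^ (e % (p:ℕ)) := by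
      conv_lhs => rw [← Nat.div_add_mod e (p:ℕ)]
      rw [pow_add, pow_mul, hω.pow_eq_one, one_pow, one_mul]
    have hr : e % (p:ℕ) ∈ Finset.Ico 1 (p:ℕ) := by
      simp only [Finset.mem_Ico]
      have h1 : e % (p:ℕ) < (p:ℕ) := Nat.mod_lt _ (by omega)
      have h2 : e % (p:ℕ) ≠ 0 := fun h => hdvd (Nat.dvd_of_mod_eq_zero h)
      omega
    rw [hmod, htr _ hr, htrω]

lemma box_inj (hp : (p : ℕ).Prime) {ω : K} (hω : IsPrimitiveRoot ω p) :
    Function.Injective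
      (fun a : Fin ((p:ℕ) - 1) → ℤ => ∑ i : Fin ((p:ℕ)-1), (a i : K) * ω ^ ((i : ℕ) + 1)) := by
  have hirr : Irreducible (Polynomial.cyclotomic p ℚ) := cyclotomic.irreducible_rat p.pos
  have pb := hω.powerBasis ℚ
  have hdim : (hω.powerBasis ℚ).dim = (p:ℕ) - 1 := by
    rw [← (hω.powerBasis ℚ).finrank, IsCyclotomicExtension.finrank K hirr,
      Nat.totient_prime hp]
  have li0 : LinearIndependent ℚ (fun i : Fin ((hω.powerBasis ℚ).dim) => ω ^ (i : ℕ)) := by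
    have := (hω.powerBasis ℚ).basis.linearIndependent
    rwa [(hω.powerBasis ℚ).coe_basis, IsPrimitiveRoot.powerBasis_gen] at this
  have li1 : LinearIndependent ℚ (fun i : Fin ((p:ℕ)-1) => ω ^ (i : ℕ)) := by
    have h := li0.comp (finCongr hdim.symm) (finCongr hdim.symm).injective
    convert h using 2
    rfl
  have hω0 : ω ≠ 0 := hω.ne_zero p.pos.ne'
  have li2 : LinearIndependent ℚ (fun i : Fin ((p:ℕ)-1) => ω ^ ((i : ℕ) + 1)) := by
    have hker : LinearMap.ker (LinearMap.mulLeft ℚ ω) = ⊥ :=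
      LinearMap.ker_eq_bot.mpr (mul_right_injective₀ hω0)
    have h := li1.map' (LinearMap.mulLeft ℚ ω) hker
    convert h using 2 with i
    simp [pow_succ, mul_comm]
    all_goals rfl
  intro a b hab
  simp only at hab
  have hz : ∑ i : Fin ((p:ℕ)-1), (((a i : ℚ) - (b i : ℚ))) • ω ^ ((i:ℕ)+1) = 0 := by
    have : ∀ (c : Fin ((p:ℕ)-1) → ℤ) , ∑ i : Fin ((p:ℕ)-1), (c i : K) * ω ^ ((i:ℕ)+1)
        = ∑ i : Fin ((p:ℕ)-1), ((c i : ℚ)) • ω ^ ((i:ℕ)+1) := by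
      intro c
      refine Finset.sum_congr rfl fun i _ => ?_
      rw [Algebra.smul_def]
      norm_num
    simp only [sub_smul, Finset.sum_sub_distrib, ← this, hab, sub_self]
  have := Fintype.linearIndependent_iff.mp li2 _ hz
  funext i
  have hi := this i
  have : (a i : ℚ) = (b i : ℚ) := by linarith [hi]
  exact_mod_cast this

lemma trace_box (hp : (p : ℕ).Prime) {ω : K} (hω : IsPrimitiveRoot ω p)
    (c : Fin ((p:ℕ)-1) → ℤ) (j : ℕ) (i₀ : Fin ((p:ℕ)-1)) (hi₀ : (i₀ : ℕ) + 1 + j = (p:ℕ)) :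
    Algebra.trace ℚ K ((∑ i : Fin ((p:ℕ)-1), (c i : K) * ω ^ ((i:ℕ)+1)) * ω ^ j)
      = ((p:ℕ):ℚ) * (c i₀ : ℚ) - ∑ i : Fin ((p:ℕ)-1), (c i : ℚ) := by
  have hrw : (∑ i : Fin ((p:ℕ)-1), (c i : K) * ω ^ ((i:ℕ)+1)) * ω ^ j
      = ∑ i : Fin ((p:ℕ)-1), ((c i : ℚ)) • ω ^ ((i:ℕ)+1+j) := by
    rw [Finset.sum_mul]
    refine Finset.sum_congr rfl fun i _ => ?_
    rw [Algebra.smul_def, map_intCast]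
    ring
  rw [hrw, map_sum]
  simp only [map_smul, smul_eq_mul]
  rw [Finset.sum_congr rfl (fun i _ => by rw [trace_pow hp hω ((i:ℕ)+1+j)])]
  have hterm : ∀ i : Fin ((p:ℕ)-1),
      (c i : ℚ) * (if (p:ℕ) ∣ ((i:ℕ)+1+j) then ((p:ℕ):ℚ) - 1 else -1)
        = (if i = i₀ then ((p:ℕ):ℚ) * (c i : ℚ) else 0) - (c i : ℚ) := by
    intro i
    have hiff : ((p:ℕ) ∣ ((i:ℕ)+1+j)) ↔ i = i₀ := by
      constructor
      · rintro ⟨q, hq⟩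
        have hi : (i:ℕ) < (p:ℕ) - 1 := i.isLt
        have hi0 : (i₀:ℕ) < (p:ℕ) - 1 := i₀.isLt
        have hp2 : 2 ≤ (p:ℕ) := hp.two_le
        have hq1 : q = 1 := by
          rcases Nat.lt_or_ge q 2 with h | h
          · interval_cases q <;> omega
          · exfalso
            have : (p:ℕ) * 2 ≤ (p:ℕ) * q := Nat.mul_le_mul_left _ h
            omega
        subst hq1
        apply Fin.ext
        omega
      · rintro rfl
        exact ⟨1, by omega⟩
    by_cases h : i = i₀
    · rw [if_pos (hiff.mpr h), if_pos h]; ring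
    · rw [if_neg (fun hd => h (hiff.mp hd)), if_neg h]; ring
  rw [Finset.sum_congr rfl (fun i _ => hterm i), Finset.sum_sub_distrib,
    Finset.sum_ite_eq' Finset.univ i₀ (fun i => ((p:ℕ):ℚ) * (c i : ℚ))]
  simp

lemma dist4 (hp : (p : ℕ).Prime) {ω : K} (hω : IsPrimitiveRoot ω p)
    (a b : Fin ((p:ℕ)-1) → ℤ) :
    cycDist p ω (∑ i : Fin ((p:ℕ)-1), (a i : K) * ω ^ ((i:ℕ)+1))
        (∑ i : Fin ((p:ℕ)-1), (b i : K) * ω ^ ((i:ℕ)+1)) ^ 4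
      = (((p:ℕ):ℝ)^2 * (∑ i : Fin ((p:ℕ)-1), ((a i - b i : ℤ):ℝ)^2)
          - (((p:ℕ):ℝ)+1) * (∑ i : Fin ((p:ℕ)-1), ((a i - b i : ℤ):ℝ))^2)^2 := by
  have hp2 : 2 ≤ (p:ℕ) := hp.two_le
  have hn1 : 1 ≤ (p:ℕ) - 1 := by omega
  set c : Fin ((p:ℕ)-1) → ℤ := fun i => a i - b i with hcdef
  have hdiff : (∑ i : Fin ((p:ℕ)-1), (a i : K) * ω ^ ((i:ℕ)+1))
      - (∑ i : Fin ((p:ℕ)-1), (b i : K) * ω ^ ((i:ℕ)+1))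
      = ∑ i : Fin ((p:ℕ)-1), (c i : K) * ω ^ ((i:ℕ)+1) := by
    rw [← Finset.sum_sub_distrib]
    refine Finset.sum_congr rfl fun i _ => ?_
    simp only [hcdef]
    push_cast
    ring
  rw [cycDist, hdiff, cycNorm]
  set X : ℝ := ∑ j ∈ Finset.Icc 1 ((p:ℕ) - 1),
    ((Algebra.trace ℚ K ((∑ i : Fin ((p:ℕ)-1), (c i : K) * ω ^ ((i:ℕ)+1)) * ω ^ j) : ℚ) : ℝ) ^ 2
    with hXdef
  have hX0 : (0:ℝ) ≤ X := by positivity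
  have hd4 : Real.sqrt X ^ 4 = X ^ 2 := by
    rw [show (4:ℕ) = 2*2 from rfl, pow_mul, Real.sq_sqrt hX0]
  rw [hd4]
  -- now compute X
  have hg : ∀ j, ((p:ℕ)-1-j) % ((p:ℕ)-1) < (p:ℕ)-1 := fun j => Nat.mod_lt _ (by omega)
  set g : ℕ → Fin ((p:ℕ)-1) := fun j => ⟨((p:ℕ)-1-j) % ((p:ℕ)-1), hg j⟩ with hgdef
  have hgval : ∀ j, 1 ≤ j → (g j : ℕ) = (p:ℕ)-1-j := by
    intro j hj
    simp only [hgdef]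
    exact Nat.mod_eq_of_lt (by omega)
  have hX : X = ∑ i : Fin ((p:ℕ)-1),
      (((p:ℕ):ℝ) * ((c i : ℤ):ℝ) - ∑ i' : Fin ((p:ℕ)-1), ((c i' : ℤ):ℝ))^2 := by
    rw [hXdef]
    have hterm : ∀ j ∈ Finset.Icc 1 ((p:ℕ)-1),
        ((Algebra.trace ℚ K ((∑ i : Fin ((p:ℕ)-1), (c i : K) * ω ^ ((i:ℕ)+1)) * ω ^ j) : ℚ) : ℝ) ^ 2
          = (((p:ℕ):ℝ) * ((c (g j) : ℤ):ℝ) - ∑ i' : Fin ((p:ℕ)-1), ((c i' : ℤ):ℝ))^2 := by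
      intro j hj
      have hjm := Finset.mem_Icc.mp hj
      have hi₀ : ((g j : Fin ((p:ℕ)-1)) : ℕ) + 1 + j = (p:ℕ) := by
        rw [hgval j hjm.1]; omega
      rw [trace_box hp hω c j (g j) hi₀]
      push_cast
      ring
    rw [Finset.sum_congr rfl hterm]
    refine Finset.sum_nbij' (fun j => g j) (fun i => (p:ℕ)-1-(i:ℕ)) ?_ ?_ ?_ ?_ ?_
    · intro j _; exact Finset.mem_univ _
    · intro i _
      simp only [Finset.mem_Icc]
      have := i.isLt
      omega
    · intro j hj
      have hjm := Finset.mem_Icc.mp hj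
      show (p:ℕ)-1-((g j):ℕ) = j
      rw [hgval j hjm.1]
      omega
    · intro i _
      apply Fin.ext
      show ((g ((p:ℕ)-1-(i:ℕ))):ℕ) = (i:ℕ)
      have hlt := i.isLt
      rw [hgval _ (by omega)]
      omega
    · intro j _
      rfl
  rw [hX]
  have hcard : ((Finset.univ : Finset (Fin ((p:ℕ)-1))).card : ℝ) = ((p:ℕ):ℝ) - 1 := by
    rw [Finset.card_univ, Fintype.card_fin, Nat.cast_sub (by omega)]
    norm_num
  rw [Finset.sum_congr rfl (fun i _ => show
      (((p:ℕ):ℝ) * ((c i : ℤ):ℝ) - ∑ i' : Fin ((p:ℕ)-1), ((c i' : ℤ):ℝ))^2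
      = ((p:ℕ):ℝ)^2 * ((c i:ℤ):ℝ)^2
        - (2*((p:ℕ):ℝ)*(∑ i' : Fin ((p:ℕ)-1), ((c i' : ℤ):ℝ))) * ((c i:ℤ):ℝ)
        + (∑ i' : Fin ((p:ℕ)-1), ((c i' : ℤ):ℝ))^2 * 1 from by ring)]
  rw [Finset.sum_add_distrib, Finset.sum_sub_distrib, ← Finset.mul_sum, ← Finset.mul_sum,
    ← Finset.mul_sum, Finset.sum_const, nsmul_eq_mul, hcard]
  have : ∀ i : Fin ((p:ℕ)-1), ((c i : ℤ):ℝ) = ((a i - b i : ℤ):ℝ) := fun i => by rw [hcdef]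
  simp only [this]
  ring

end Aux

/-- The fourth moment of distances between points of `B(p,N)`:
`M₄(p,N) = (2/45)·N(N+1)(p−1)·[(2N²+2N)(5p⁵−8p⁴+p³+8p²−21p−18) − 3(p²−p−1)²]`. -/
theorem stmt12 (p : ℕ+) (hp : (p : ℕ).Prime) (hodd : Odd (p : ℕ))
    (K : Type*) [Field K] [Algebra ℚ K] [IsCyclotomicExtension {(p : ℕ)} ℚ K]
    (ω : K) (hω : IsPrimitiveRoot ω p) (N : ℕ) (hN : 0 < N) :
    (1 / ((cycBox p ω N).card : ℝ) ^ 2) *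
      ∑ α ∈ cycBox p ω N, ∑ β ∈ cycBox p ω N, (cycDist p ω α β) ^ 4
      = (2 / 45) * N * (N + 1) * ((p : ℝ) - 1) *
          ((2 * (N : ℝ) ^ 2 + 2 * N) *
              (5 * (p : ℝ) ^ 5 - 8 * (p : ℝ) ^ 4 + (p : ℝ) ^ 3 + 8 * (p : ℝ) ^ 2
                - 21 * (p : ℝ) - 18)
            - 3 * ((p : ℝ) ^ 2 - (p : ℝ) - 1) ^ 2) := by
  classical
  letI : DecidableEq K := Classical.decEq K
  have hp2 : 2 ≤ (p : ℕ) := hp.two_le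
  set D : Finset ℤ := Finset.Icc (-(N:ℤ)) N with hD
  set f : (Fin ((p:ℕ)-1) → ℤ) → K :=
    fun a => ∑ i : Fin ((p:ℕ)-1), (a i : K) * ω ^ ((i : ℕ) + 1) with hf
  have hinj : Function.Injective f := box_inj hp hω
  have hbox : cycBox (p:ℕ) ω N = (Fintype.piFinset fun _ : Fin ((p:ℕ) - 1) => D).image f := by
    rw [cycBox]
  have himg : ∀ F : K → ℝ, ∑ α ∈ cycBox (p:ℕ) ω N, F α
      = ∑ a ∈ Fintype.piFinset (fun _ : Fin ((p:ℕ)-1) => D), F (f a) := by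
    intro F
    rw [hbox]
    exact Finset.sum_image (fun x _ y _ h => hinj h)
  have hDcard : D.card = 2*N+1 := by
    rw [hD, Int.card_Icc]
    omega
  have hcard : (cycBox (p:ℕ) ω N).card = (2*N+1)^((p:ℕ)-1) := by
    rw [hbox, Finset.card_image_of_injective _ hinj, Fintype.card_piFinset]
    simp [hDcard]
  -- reduce to integer sums
  rw [himg (fun α => ∑ β ∈ cycBox (p:ℕ) ω N, (cycDist (p:ℕ) ω α β) ^ 4)]
  rw [Finset.sum_congr rfl (fun a _ =>
    himg (fun β => (cycDist (p:ℕ) ω (f a) β) ^ 4))]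
  rw [Finset.sum_congr rfl (fun a _ => Finset.sum_congr rfl (fun b _ =>
    dist4 hp hω a b))]
  rw [double_to_pair D ((p:ℕ)-1) (fun a b =>
      (((p:ℕ):ℝ)^2 * (∑ i : Fin ((p:ℕ)-1), ((a i - b i : ℤ):ℝ)^2)
        - (((p:ℕ):ℝ)+1) * (∑ i : Fin ((p:ℕ)-1), ((a i - b i : ℤ):ℝ))^2)^2)]
  -- moments
  obtain ⟨hm0, hm1, hm2, hm3, hm4⟩ := diff_moments N
  obtain ⟨c0, c1, c2, c3, c4, d1, d2, e1, e2⟩ :=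
    moments_pi (D ×ˢ D) (fun v : ℤ × ℤ => ((v.1 - v.2 : ℤ):ℝ))
      ((2*(N:ℝ)+1)^2) (2*((N:ℝ)*(N+1))/3) (2*((N:ℝ)*(N+1))*(8*((N:ℝ)*(N+1))-1)/15)
      hm0 hm1 hm2 hm3 hm4 ((p:ℕ)-1)
  rw [Finset.sum_congr rfl (fun z _ => show
      (((p:ℕ):ℝ)^2 * (∑ i : Fin ((p:ℕ)-1), (((z i).1 - (z i).2 : ℤ):ℝ)^2)
        - (((p:ℕ):ℝ)+1) * (∑ i : Fin ((p:ℕ)-1), (((z i).1 - (z i).2 : ℤ):ℝ))^2)^2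
      = (((p:ℕ):ℝ)^4) * (∑ i : Fin ((p:ℕ)-1), (((z i).1 - (z i).2 : ℤ):ℝ)^2)^2
        - (2*((p:ℕ):ℝ)^2*(((p:ℕ):ℝ)+1)) * ((∑ i : Fin ((p:ℕ)-1), (((z i).1 - (z i).2 : ℤ):ℝ)^2)
            * (∑ i : Fin ((p:ℕ)-1), (((z i).1 - (z i).2 : ℤ):ℝ))^2)
        + ((((p:ℕ):ℝ)+1)^2) * (∑ i : Fin ((p:ℕ)-1), (((z i).1 - (z i).2 : ℤ):ℝ))^4
      from by ring)]
  rw [Finset.sum_add_distrib, Finset.sum_sub_distrib, ← Finset.mul_sum, ← Finset.mul_sum,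
    ← Finset.mul_sum, d2, e2, c4]
  -- final arithmetic
  have hncast : (((p:ℕ) - 1 : ℕ) : ℝ) = ((p:ℕ):ℝ) - 1 := by
    rw [Nat.cast_sub (by omega)]
    norm_num
  have hcardR : ((cycBox (p:ℕ) ω N).card : ℝ) = (2*(N:ℝ)+1)^((p:ℕ)-1) := by
    rw [hcard]
    push_cast
    ring
  rw [hcardR]
  have hMn : ((2*(N:ℝ)+1)^2)^((p:ℕ)-1) = ((2*(N:ℝ)+1)^((p:ℕ)-1))^2 := by
    rw [← pow_mul, ← pow_mul, Nat.mul_comm]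
  rw [hMn, hncast]
  have hCne : ((2*(N:ℝ)+1)^((p:ℕ)-1))^2 ≠ 0 := by positivity
  field_simp
  ring
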